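/- Let R ⊆ S be a standard extension of finite valuation rings with trace Tr : S → R. Every R-linear map T : S → R has the form T(s) = Tr(ts) for a unique t ∈ S. -/

import Mathlib

open IsLocalRing Matrix Polynomial

theorem linear_maps_are_trace_forms
    (R : Type*) [CommRing R] [Fintype R] [IsLocalRing R] [IsPrincipalIdealRing R]
    (π : R) (hπ : IsLocalRing.maximalIdeal R = Ideal.span {π})
    (f : Polynomial R) (hf : f.Monic)
    (hirr : Irreducible
      (f.map (Ideal.Quotient.mk (IsLocalRing.maximalIdeal R))))
    (T : AdjoinRoot f →ₗ[R] R) :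
    ∃! t : AdjoinRoot f, ∀ s : AdjoinRoot f,
      T s = Algebra.trace R (AdjoinRoot f) (t * s) := by
  classical
  set p := IsLocalRing.maximalIdeal R with hp
  set S := AdjoinRoot f with hS
  let pb : PowerBasis R S := AdjoinRoot.powerBasis' hf
  let b : Module.Basis (Fin pb.dim) R S := pb.basis
  letI : Module.Free R S := Module.Free.of_basis b
  letI : Module.Finite R S := Module.Finite.of_basis b
  letI : Field (R ⧸ p) := Ideal.Quotient.field p
  haveI hmax : (Ideal.span {f.map (Ideal.Quotient.mk p)}).IsMaximal :=
    PrincipalIdealRing.isMaximal_of_irreducible hirr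
  letI : Field ((R ⧸ p)[X] ⧸ Ideal.span {f.map (Ideal.Quotient.mk p)}) :=
    Ideal.Quotient.field _
  have e := AdjoinRoot.quotAdjoinRootEquivQuotPolynomialQuot p f
  have hfield : IsField (S ⧸ (p.map (algebraMap R S))) := by
    have : IsField ((R ⧸ p)[X] ⧸ Ideal.span {f.map (Ideal.Quotient.mk p)}) :=
      Field.toIsField _
    exact e.toMulEquiv.isField this
  letI : Field (S ⧸ (p.map (algebraMap R S))) := hfield.toField
  let bq : Module.Basis (Fin pb.dim) (R ⧸ p) (S ⧸ (p.map (algebraMap R S))) :=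
    IsLocalRing.basisQuotient b
  letI : Module.Finite (R ⧸ p) (S ⧸ (p.map (algebraMap R S))) := Module.Finite.of_basis bq
  haveI : Finite (R ⧸ p) := Finite.of_surjective _ Ideal.Quotient.mk_surjective
  have hdisc : Algebra.discr (R ⧸ p) bq ≠ 0 := Algebra.discr_not_zero_of_basis _ _
  -- reduction of the trace matrix
  have key : Ideal.Quotient.mk p (Algebra.traceMatrix R b).det
      = (Algebra.traceMatrix (R ⧸ p) bq).det := by
    rw [RingHom.map_det]
    congr 1
    ext i j
    simp only [RingHom.mapMatrix_apply, Matrix.map_apply, Algebra.traceMatrix_apply,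
      Algebra.traceForm_apply]
    rw [← Algebra.trace_quotient_mk, _root_.map_mul, ← IsLocalRing.basisQuotient_apply,
      ← IsLocalRing.basisQuotient_apply]
  have hunit : IsUnit (Algebra.traceMatrix R b).det := by
    by_contra h
    have hmem : (Algebra.traceMatrix R b).det ∈ p := by
      rw [hp]
      exact h
    have := Ideal.Quotient.eq_zero_iff_mem.mpr hmem
    rw [key] at this
    exact hdisc (by rwa [Algebra.discr_def])
  letI : Invertible (Algebra.traceMatrix R b) := Matrix.invertibleOfIsUnitDet _ hunit
  set M := Algebra.traceMatrix R b with hM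
  let v : Fin pb.dim → R := fun i => T (b i)
  let t : S := b.equivFun.symm (M⁻¹ *ᵥ v)
  have ht : ∀ i, Algebra.trace R S (t * b i) = T (b i) := by
    intro i
    have h1 := Algebra.traceMatrix_of_basis_mulVec b t
    have h2 : b.equivFun t = M⁻¹ *ᵥ v := b.equivFun.apply_symm_apply _
    rw [h2, Matrix.mulVec_mulVec, Matrix.mul_nonsing_inv _ hunit, Matrix.one_mulVec] at h1
    exact (congrFun h1 i).symm
  have hTt : ∀ s, T s = Algebra.trace R S (t * s) := by
    have : T = Algebra.traceForm R S t := by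
      apply b.ext
      intro i
      rw [Algebra.traceForm_apply, ht i]
    intro s
    rw [this, Algebra.traceForm_apply]
  refine ⟨t, hTt, ?_⟩
  intro y hy
  have heq : ∀ i, Algebra.trace R S (y * b i) = Algebra.trace R S (t * b i) := by
    intro i
    rw [ht i]
    exact (hy (b i)).symm
  have h1 := Algebra.traceMatrix_of_basis_mulVec b y
  have h2 := Algebra.traceMatrix_of_basis_mulVec b t
  have h3 : M *ᵥ b.equivFun y = M *ᵥ b.equivFun t := by
    rw [h1, h2]
    funext i
    exact heq i
  have h4 : b.equivFun y = b.equivFun t := by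
    have := congrArg (fun w => M⁻¹ *ᵥ w) h3
    simpa only [Matrix.mulVec_mulVec, Matrix.nonsing_inv_mul _ hunit, Matrix.one_mulVec]
      using this
  exact b.equivFun.injective h4
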